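/- Let ℰ: ℝ → ℝ be ℰ(v) = v², α = 1, and define the consensus point v_α(μ) = (∫ v e^{−ℰ(v)} dμ)/(∫ e^{−ℰ(v)} dμ). For n ∈ ℕ let μ_n = δ_n and ν_n = e^{−n}δ_0 + (1 − e^{−n})δ_n. Then v_α(μ_n) = n, v_α(ν_n) = n(1 − e^{−n})/(e^{n²−n} + 1 − e^{−n}), the Wasserstein-1 distance satisfies W₁(μ_n, ν_n) = n e^{−n}, and hence |v_α(μ_n) − v_α(ν_n)| / W₁(μ_n, ν_n) = (1 − (1 − e^{−n})/(e^{n²−n} + 1 − e^{−n})) · e^{n}, which grows exponentially in n. -/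

import Mathlib

open MeasureTheory Set

/-- Wasserstein-1 distance between probability measures on `ℝ`. -/
noncomputable def W1 (μ ν : Measure ℝ) : ℝ :=
  sInf {r : ℝ | ∃ π : Measure (ℝ × ℝ), IsProbabilityMeasure π ∧
    π.map Prod.fst = μ ∧ π.map Prod.snd = ν ∧ r = ∫ x, |x.1 - x.2| ∂π}

/-- Consensus point with `ℰ(v) = v²`, `α = 1`. -/
noncomputable def vcons (μ : Measure ℝ) : ℝ :=
  (∫ v, v * Real.exp (-v ^ 2) ∂μ) / (∫ v, Real.exp (-v ^ 2) ∂μ)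

lemma integrable_dirac'' {α : Type*} [MeasurableSpace α] [MeasurableSingletonClass α]
    (f : α → ℝ) (a : α) : Integrable f (Measure.dirac a) :=
  (integrable_const (f a)).congr (MeasureTheory.ae_eq_dirac f).symm

/-- Any admissible coupling has transport cost exactly `n e^{-n}`. -/
lemma coupling_cost (n : ℕ) (hn : 1 ≤ n) (π : Measure (ℝ × ℝ))
    (h1 : π.map Prod.fst = Measure.dirac (n : ℝ))
    (h2 : π.map Prod.snd = ENNReal.ofReal (Real.exp (-(n : ℝ))) • Measure.dirac (0 : ℝ) +
        ENNReal.ofReal (1 - Real.exp (-(n : ℝ))) • Measure.dirac (n : ℝ)) :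
    ∫ x, |x.1 - x.2| ∂π = (n : ℝ) * Real.exp (-(n : ℝ)) := by
  have hn0 : (n : ℝ) ≠ 0 := Nat.cast_ne_zero.mpr (by omega)
  have ha1 : ∀ᵐ x ∂π, x.1 = (n : ℝ) := by
    have : π {x : ℝ × ℝ | x.1 ≠ (n : ℝ)} = 0 := by
      have : π (Prod.fst ⁻¹' ({(n : ℝ)}ᶜ)) = (π.map Prod.fst) ({(n : ℝ)}ᶜ) :=
        (Measure.map_apply measurable_fst (measurableSet_singleton _).compl).symm
      rw [h1] at this
      simp [Measure.dirac_apply'] at this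
      exact this
    exact this
  have ha2 : ∀ᵐ x ∂π, x.2 = 0 ∨ x.2 = (n : ℝ) := by
    have hs : MeasurableSet (({0, (n : ℝ)} : Set ℝ)ᶜ) :=
      (MeasurableSet.insert (measurableSet_singleton _) 0).compl
    have hz : (π.map Prod.snd) (({0, (n : ℝ)} : Set ℝ)ᶜ) = 0 := by
      rw [h2]
      simp only [Measure.add_apply, Measure.smul_apply, smul_eq_mul]
      rw [Measure.dirac_apply' _ hs, Measure.dirac_apply' _ hs]
      simp
    have hz' : π (Prod.snd ⁻¹' (({0, (n : ℝ)} : Set ℝ)ᶜ)) = 0 := by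
      rw [← Measure.map_apply measurable_snd hs]; exact hz
    rw [ae_iff]
    have hset : {x : ℝ × ℝ | ¬(x.2 = 0 ∨ x.2 = (n : ℝ))} =
        Prod.snd ⁻¹' (({0, (n : ℝ)} : Set ℝ)ᶜ) := by
      ext x; simp [Set.mem_preimage]
    rw [hset]; exact hz'
  have hcong : (fun x : ℝ × ℝ => |x.1 - x.2|) =ᵐ[π]
      (Set.indicator {x : ℝ × ℝ | x.2 = 0} (fun _ => (n : ℝ))) := by
    filter_upwards [ha1, ha2] with x hx1 hx2
    rcases hx2 with h | h
    · rw [hx1, h]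
      rw [Set.indicator_of_mem (by simpa [Set.mem_setOf_eq] using h)]
      simp [abs_of_nonneg (show (0:ℝ) ≤ (n:ℝ) by positivity)]
    · rw [hx1, h]
      rw [Set.indicator_of_notMem (by simp [Set.mem_setOf_eq, h, hn0])]
      simp
  rw [integral_congr_ae hcong]
  have hS : MeasurableSet {x : ℝ × ℝ | x.2 = 0} :=
    measurable_snd (measurableSet_singleton 0)
  rw [integral_indicator_const _ hS]
  have : π {x : ℝ × ℝ | x.2 = 0} = ENNReal.ofReal (Real.exp (-(n : ℝ))) := by
    have : π (Prod.snd ⁻¹' ({(0 : ℝ)})) = (π.map Prod.snd) {(0 : ℝ)} :=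
      (Measure.map_apply measurable_snd (measurableSet_singleton _)).symm
    rw [h2] at this
    simp only [Measure.add_apply, Measure.smul_apply, smul_eq_mul] at this
    rw [Measure.dirac_apply_of_mem (mem_singleton _),
      Measure.dirac_apply' _ (measurableSet_singleton _)] at this
    have hne : (n : ℝ) ∉ ({(0 : ℝ)} : Set ℝ) := by simp [hn0]
    simp [hne] at this
    exact this
  rw [measureReal_def, this, ENNReal.toReal_ofReal (Real.exp_nonneg _), smul_eq_mul]
  ring

theorem stmt_5 (n : ℕ) (hn : 1 ≤ n) :
    vcons (Measure.dirac (n : ℝ)) = (n : ℝ) ∧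
    vcons (ENNReal.ofReal (Real.exp (-(n : ℝ))) • Measure.dirac (0 : ℝ) +
        ENNReal.ofReal (1 - Real.exp (-(n : ℝ))) • Measure.dirac (n : ℝ)) =
      (n : ℝ) * (1 - Real.exp (-(n : ℝ))) /
        (Real.exp ((n : ℝ) ^ 2 - n) + 1 - Real.exp (-(n : ℝ))) ∧
    W1 (Measure.dirac (n : ℝ))
        (ENNReal.ofReal (Real.exp (-(n : ℝ))) • Measure.dirac (0 : ℝ) +
          ENNReal.ofReal (1 - Real.exp (-(n : ℝ))) • Measure.dirac (n : ℝ)) =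
      (n : ℝ) * Real.exp (-(n : ℝ)) ∧
    |vcons (Measure.dirac (n : ℝ)) -
        vcons (ENNReal.ofReal (Real.exp (-(n : ℝ))) • Measure.dirac (0 : ℝ) +
          ENNReal.ofReal (1 - Real.exp (-(n : ℝ))) • Measure.dirac (n : ℝ))| /
      W1 (Measure.dirac (n : ℝ))
        (ENNReal.ofReal (Real.exp (-(n : ℝ))) • Measure.dirac (0 : ℝ) +
          ENNReal.ofReal (1 - Real.exp (-(n : ℝ))) • Measure.dirac (n : ℝ)) =
      (1 - (1 - Real.exp (-(n : ℝ))) /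
          (Real.exp ((n : ℝ) ^ 2 - n) + 1 - Real.exp (-(n : ℝ)))) * Real.exp (n : ℝ) := by
  have hn0 : (n : ℝ) ≠ 0 := Nat.cast_ne_zero.mpr (by omega)
  have hn1 : (1 : ℝ) ≤ (n : ℝ) := by exact_mod_cast hn
  set E := Real.exp (-(n : ℝ)) with hE
  have hEpos : 0 < E := Real.exp_pos _
  have hE1 : E < 1 := by
    rw [hE]
    calc Real.exp (-(n : ℝ)) < Real.exp 0 := Real.exp_lt_exp.mpr (by linarith)
    _ = 1 := Real.exp_zero
  set G := Real.exp (-(n : ℝ) ^ 2) with hG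
  have hGpos : 0 < G := Real.exp_pos _
  set D := Real.exp ((n : ℝ) ^ 2 - n) + 1 - E with hD
  have hDpos : 0 < D := by
    have := Real.exp_pos ((n : ℝ) ^ 2 - n); rw [hD]; linarith
  -- First part
  have hv1 : vcons (Measure.dirac (n : ℝ)) = (n : ℝ) := by
    unfold vcons
    rw [integral_dirac, integral_dirac]
    field_simp
  -- integrals over ν
  have hint : ∀ f : ℝ → ℝ,
      ∫ v, f v ∂(ENNReal.ofReal E • Measure.dirac (0 : ℝ) +
        ENNReal.ofReal (1 - E) • Measure.dirac (n : ℝ)) = E * f 0 + (1 - E) * f n := by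
    intro f
    rw [integral_add_measure ((integrable_dirac'' f 0).smul_measure ENNReal.ofReal_ne_top)
        ((integrable_dirac'' f n).smul_measure ENNReal.ofReal_ne_top),
      integral_smul_measure, integral_smul_measure, integral_dirac, integral_dirac,
      ENNReal.toReal_ofReal hEpos.le, ENNReal.toReal_ofReal (by linarith)]
    simp [smul_eq_mul]
  have hv2 : vcons (ENNReal.ofReal E • Measure.dirac (0 : ℝ) +
      ENNReal.ofReal (1 - E) • Measure.dirac (n : ℝ)) = (n : ℝ) * (1 - E) / D := by
    have hkey : Real.exp ((n : ℝ) ^ 2 - n) * Real.exp (-(n : ℝ) ^ 2) = E := by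
      rw [hE, ← Real.exp_add]; congr 1; ring
    unfold vcons
    rw [hint (fun v => v * Real.exp (-v ^ 2)), hint (fun v => Real.exp (-v ^ 2))]
    have hEq : E * Real.exp (-(0:ℝ) ^ 2) + (1 - E) * Real.exp (-(n:ℝ) ^ 2) = D * G := by
      rw [hD, hG]
      have : Real.exp (-(0:ℝ) ^ 2) = 1 := by norm_num
      rw [this]
      linear_combination -hkey
    have hEq2 : E * ((0:ℝ) * Real.exp (-(0:ℝ) ^ 2)) +
        (1 - E) * ((n:ℝ) * Real.exp (-(n:ℝ) ^ 2)) = ((n:ℝ) * (1 - E)) * G := by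
      rw [hG]; ring
    rw [hEq2, hEq, mul_div_mul_right _ _ (ne_of_gt hGpos)]
  -- W1
  have hw : W1 (Measure.dirac (n : ℝ)) (ENNReal.ofReal E • Measure.dirac (0 : ℝ) +
      ENNReal.ofReal (1 - E) • Measure.dirac (n : ℝ)) = (n : ℝ) * E := by
    unfold W1
    have hset : {r : ℝ | ∃ π : Measure (ℝ × ℝ), IsProbabilityMeasure π ∧
        π.map Prod.fst = Measure.dirac (n : ℝ) ∧
        π.map Prod.snd = ENNReal.ofReal E • Measure.dirac (0 : ℝ) +
          ENNReal.ofReal (1 - E) • Measure.dirac (n : ℝ) ∧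
        r = ∫ x, |x.1 - x.2| ∂π} = {(n : ℝ) * E} := by
      ext r
      simp only [Set.mem_setOf_eq, Set.mem_singleton_iff]
      constructor
      · rintro ⟨π, _, hf, hs, rfl⟩
        exact coupling_cost n hn π hf hs
      · rintro rfl
        refine ⟨ENNReal.ofReal E • Measure.dirac ((n : ℝ), (0 : ℝ)) +
          ENNReal.ofReal (1 - E) • Measure.dirac ((n : ℝ), (n : ℝ)), ?_, ?_, ?_, ?_⟩
        · constructor
          simp only [Measure.add_apply, Measure.smul_apply, measure_univ, smul_eq_mul, mul_one]
          rw [← ENNReal.ofReal_add hEpos.le (by linarith)]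
          norm_num
        · rw [Measure.map_add _ _ measurable_fst, Measure.map_smul, Measure.map_smul,
            Measure.map_dirac' measurable_fst, Measure.map_dirac' measurable_fst]
          show ENNReal.ofReal E • Measure.dirac (n : ℝ) +
            ENNReal.ofReal (1 - E) • Measure.dirac (n : ℝ) = _
          rw [← add_smul, ← ENNReal.ofReal_add hEpos.le (by linarith)]
          norm_num
        · rw [Measure.map_add _ _ measurable_snd, Measure.map_smul, Measure.map_smul,
            Measure.map_dirac' measurable_snd, Measure.map_dirac' measurable_snd]
        · refine (coupling_cost n hn _ ?_ ?_).symm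
          · rw [Measure.map_add _ _ measurable_fst, Measure.map_smul, Measure.map_smul,
              Measure.map_dirac' measurable_fst, Measure.map_dirac' measurable_fst]
            show ENNReal.ofReal E • Measure.dirac (n : ℝ) +
              ENNReal.ofReal (1 - E) • Measure.dirac (n : ℝ) = _
            rw [← add_smul, ← ENNReal.ofReal_add hEpos.le (by linarith)]
            norm_num
          · rw [Measure.map_add _ _ measurable_snd, Measure.map_smul, Measure.map_smul,
              Measure.map_dirac' measurable_snd, Measure.map_dirac' measurable_snd]
    rw [hset, csInf_singleton]
  refine ⟨hv1, hv2, hw, ?_⟩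
  rw [hv1, hv2, hw]
  have hle : (n : ℝ) * (1 - E) / D ≤ (n : ℝ) := by
    rw [div_le_iff₀ hDpos]
    have h1 : (1 - E) ≤ D := by
      have := Real.exp_pos ((n : ℝ) ^ 2 - n)
      have h2 : (1 : ℝ) ≤ Real.exp ((n : ℝ) ^ 2 - n) := by
        apply Real.one_le_exp
        nlinarith
      rw [hD]; linarith
    nlinarith
  rw [abs_of_nonneg (by linarith)]
  have hEn : Real.exp (n : ℝ) = E⁻¹ := by
    rw [hE, ← Real.exp_neg]; ring_nf
  rw [hEn]
  field_simp
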